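/- The limit as n → ∞ of (1 + 1/n)^(n-1) equals e, hence the tree-forest ratio of the complete graphs K_n converges to Euler's number e. -/
import Mathlib


/-- `(1+1/n)^(n-1) → e`, hence the tree-forest ratio of the complete graphs `K_n`
converges to Euler's number. -/
theorem treeForestRatio_completeGraph_tendsto_e :
    Filter.Tendsto (fun n : ℕ => (1 + 1 / (n : ℝ)) ^ (n - 1))
      Filter.atTop (nhds (Real.exp 1)) := by
  have h1 : Filter.Tendsto (fun n : ℕ => (1 + 1 / (n : ℝ)) ^ n)
      Filter.atTop (nhds (Real.exp 1)) := by
    simpa using Real.tendsto_one_add_div_pow_exp 1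
  have h2 : Filter.Tendsto (fun n : ℕ => (1 + 1 / (n : ℝ))) Filter.atTop (nhds 1) := by
    simpa using (tendsto_const_nhds.add (tendsto_one_div_atTop_nhds_zero_nat) :
      Filter.Tendsto (fun n : ℕ => (1:ℝ) + 1 / n) Filter.atTop (nhds (1 + 0)))
  have h3 := h1.div h2 one_ne_zero
  rw [div_one] at h3
  refine h3.congr' ?_
  filter_upwards [Filter.eventually_ge_atTop 1] with n hn
  have hne : (1 + 1 / (n : ℝ)) ≠ 0 := by positivity
  simp only [Pi.div_apply]
  rw [pow_sub₀ _ hne hn, pow_one]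
  rw [div_eq_mul_inv]
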